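/- arXiv:2410.20952 — 4 statements merged into one kernel-verified Lean document; each statement's English description precedes it below -/
import Mathlib

section
/- Let m ≥ 1, let θ ∈ ℝ satisfy |sin θ| ≠ |cos θ|, and let A₁, A₂ be m×m real matrices. Suppose that for k = 1, 2 we are given an m×m permutation matrix P_k, a unit lower triangular matrix L_k with |(L_k)_{ij}| < 1 for all i > j, and an upper triangular matrix U_k, such that P_k A_k = L_k U_k. Set e = 1 if |sin θ| > |cos θ| and e = 0 otherwise; set θ̂ = θ if e = 0 and θ̂ = π/2 − θ if e = 1; let P_θ be the 2×2 identity matrix if e = 0 and the 2×2 swap permutation matrix if e = 1. Define B = (R_θ ⊗ I_m)(A₁ ⊕ A₂), P = (P₁ ⊕ P₂)(P_θ ⊗ I_m), L = the 2×2 block matrix with blocks [L₁, 0; −tan(θ̂)·P₂P₁ᵀL₁, L₂], and U = the 2×2 block matrix with blocks [(−1)^e·cos(θ̂)·U₁, sin(θ̂)·L₁⁻¹P₁A₂; 0, (1/cos(θ̂))·U₂]. Then P·B = L·U, P is a permutation matrix, L is unit lower triangular with |L_{ij}| < 1 for all i > j, and U is upper triangular. -/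
open Matrix

/-- `P` is a permutation matrix: `P i j = 1` if `i = e j` and `0` otherwise,
for some permutation `e` (so that `P • eₖ = e_{σ(k)}`). -/
def IsPermMatrix {ι : Type*} [DecidableEq ι] (P : Matrix ι ι ℝ) : Prop :=
  ∃ e : Equiv.Perm ι, ∀ i j, P i j = if i = e j then 1 else 0

/-- Linear index of `Fin m ⊕ Fin m`, listing the first block before the second. -/
def sumIdx {m : ℕ} : Fin m ⊕ Fin m → ℕ
  | Sum.inl i => (i : ℕ)
  | Sum.inr i => m + (i : ℕ)

lemma perm_transpose_mul {ι : Type*} [Fintype ι] [DecidableEq ι] {P : Matrix ι ι ℝ}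
    (h : IsPermMatrix P) : Pᵀ * P = 1 := by
  obtain ⟨e, he⟩ := h
  ext i j
  simp [Matrix.mul_apply, Matrix.transpose_apply, he, Matrix.one_apply, ite_and,
    Finset.sum_ite_eq, e.injective.eq_iff, eq_comm]

lemma perm_mul_apply {ι : Type*} [Fintype ι] [DecidableEq ι] {P : Matrix ι ι ℝ}
    {e : Equiv.Perm ι} (he : ∀ i j, P i j = if i = e j then 1 else 0)
    (M : Matrix ι ι ℝ) (i j : ι) : (P * M) i j = M (e.symm i) j := by
  simp only [Matrix.mul_apply, he]
  have : ∀ k, i = e k ↔ k = e.symm i := by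
    intro k; constructor <;> intro h <;> simp [h]
  simp [this]

lemma isPerm_mul_transpose {ι : Type*} [Fintype ι] [DecidableEq ι]
    {P₁ P₂ : Matrix ι ι ℝ} (h₁ : IsPermMatrix P₁) (h₂ : IsPermMatrix P₂) :
    IsPermMatrix (P₂ * P₁ᵀ) := by
  obtain ⟨e₁, he₁⟩ := h₁
  obtain ⟨e₂, he₂⟩ := h₂
  refine ⟨e₁.symm.trans e₂, fun i j => ?_⟩
  simp only [Matrix.mul_apply, Matrix.transpose_apply, he₁, he₂, Equiv.trans_apply]
  have : ∀ k, (if i = e₂ k then (1:ℝ) else 0) * (if j = e₁ k then 1 else 0)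
      = if k = e₁.symm j then (if i = e₂ k then 1 else 0) else 0 := by
    intro k
    by_cases hk : j = e₁ k
    · simp [hk]
    · have : k ≠ e₁.symm j := fun h => hk (by simp [h])
      simp [hk, this]
  simp [this, Finset.sum_ite_eq]
  congr

lemma key_eq {m : ℕ} (θh : ℝ) (hc : Real.cos θh ≠ 0) (ε : ℝ)
    (A₁ A₂ P₁ P₂ L₁ L₂ U₁ U₂ : Matrix (Fin m) (Fin m) ℝ)
    (hinv : L₁ * L₁⁻¹ = 1) (hortho : P₁ᵀ * P₁ = 1)
    (hA₁ : P₁ * A₁ = L₁ * U₁) (hA₂ : P₂ * A₂ = L₂ * U₂) :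
    Matrix.fromBlocks ((ε * Real.cos θh) • (P₁ * A₁)) (Real.sin θh • (P₁ * A₂))
        ((-(ε * Real.sin θh)) • (P₂ * A₁)) (Real.cos θh • (P₂ * A₂)) =
    Matrix.fromBlocks L₁ 0 (-Real.tan θh • (P₂ * P₁ᵀ * L₁)) L₂ *
    Matrix.fromBlocks ((ε * Real.cos θh) • U₁) (Real.sin θh • (L₁⁻¹ * P₁ * A₂)) 0
      ((Real.cos θh)⁻¹ • U₂) := by
  have htan : Real.tan θh = Real.sin θh / Real.cos θh := Real.tan_eq_sin_div_cos θh
  have hLL : L₁ * (L₁⁻¹ * P₁ * A₂) = P₁ * A₂ := by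
    rw [Matrix.mul_assoc L₁⁻¹, ← Matrix.mul_assoc L₁, hinv, Matrix.one_mul]
  have hPP : P₂ * P₁ᵀ * L₁ * U₁ = P₂ * A₁ := by
    rw [Matrix.mul_assoc (P₂ * P₁ᵀ), ← hA₁, ← Matrix.mul_assoc, Matrix.mul_assoc P₂,
      hortho, Matrix.mul_one]
  have hPPA : P₂ * P₁ᵀ * L₁ * (L₁⁻¹ * P₁ * A₂) = P₂ * A₂ := by
    rw [Matrix.mul_assoc L₁⁻¹, ← Matrix.mul_assoc (P₂ * P₁ᵀ * L₁), ← Matrix.mul_assoc,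
      Matrix.mul_assoc (P₂ * P₁ᵀ), hinv, Matrix.mul_one, Matrix.mul_assoc P₂, hortho,
      Matrix.mul_one]
  rw [Matrix.fromBlocks_multiply, Matrix.fromBlocks_inj]
  refine ⟨?_, ?_, ?_, ?_⟩
  · rw [Matrix.mul_smul, hA₁, Matrix.zero_mul, add_zero]
  · rw [Matrix.mul_smul, hLL, Matrix.zero_mul, add_zero]
  · rw [Matrix.mul_zero, add_zero, Matrix.smul_mul, Matrix.mul_smul, smul_smul, hPP, htan]
    congr 1
    field_simp
  · rw [Matrix.smul_mul, Matrix.mul_smul, smul_smul, hPPA, Matrix.mul_smul, ← hA₂, htan,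
      ← add_smul]
    have h1 : Real.sin θh ^ 2 + Real.cos θh ^ 2 = 1 := Real.sin_sq_add_cos_sq θh
    congr 1
    field_simp
    linear_combination h1

lemma isPerm_blockDiag {m : ℕ} {P₁ P₂ : Matrix (Fin m) (Fin m) ℝ}
    (h₁ : IsPermMatrix P₁) (h₂ : IsPermMatrix P₂) :
    IsPermMatrix (Matrix.fromBlocks P₁ 0 0 P₂) := by
  obtain ⟨e₁, he₁⟩ := h₁
  obtain ⟨e₂, he₂⟩ := h₂
  refine ⟨Equiv.sumCongr e₁ e₂, fun i j => ?_⟩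
  rcases i with i | i <;> rcases j with j | j <;>
    simp [Matrix.fromBlocks, he₁, he₂]

lemma isPerm_blockAnti {m : ℕ} {P₁ P₂ : Matrix (Fin m) (Fin m) ℝ}
    (h₁ : IsPermMatrix P₁) (h₂ : IsPermMatrix P₂) :
    IsPermMatrix (Matrix.fromBlocks 0 P₁ P₂ 0) := by
  obtain ⟨e₁, he₁⟩ := h₁
  obtain ⟨e₂, he₂⟩ := h₂
  refine ⟨(Equiv.sumCongr e₂ e₁).trans (Equiv.sumComm _ _), fun i j => ?_⟩
  rcases i with i | i <;> rcases j with j | j <;>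
    simp [Matrix.fromBlocks, he₁, he₂]

lemma unitLower_inv {m : ℕ} {L₁ : Matrix (Fin m) (Fin m) ℝ}
    (hlow : ∀ i j : Fin m, (i : ℕ) < (j : ℕ) → L₁ i j = 0) (hdiag : ∀ i, L₁ i i = 1) :
    L₁ * L₁⁻¹ = 1 := by
  have hbt : L₁.BlockTriangular OrderDual.toDual := fun i j h => hlow i j h
  have hdet : L₁.det = 1 := by
    rw [Matrix.det_of_lowerTriangular L₁ hbt]
    simp [hdiag]
  exact Matrix.mul_nonsing_inv L₁ (by rw [hdet]; exact isUnit_one)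

lemma L_struct {m : ℕ} {θh : ℝ} (hlt : |Real.sin θh| < |Real.cos θh|)
    {P₁ P₂ L₁ L₂ : Matrix (Fin m) (Fin m) ℝ}
    (hP₁ : IsPermMatrix P₁) (hP₂ : IsPermMatrix P₂)
    (hL₁lower : ∀ i j : Fin m, (i : ℕ) < (j : ℕ) → L₁ i j = 0)
    (hL₂lower : ∀ i j : Fin m, (i : ℕ) < (j : ℕ) → L₂ i j = 0)
    (hL₁diag : ∀ i, L₁ i i = 1) (hL₂diag : ∀ i, L₂ i i = 1)
    (hL₁lt : ∀ i j : Fin m, (j : ℕ) < (i : ℕ) → |L₁ i j| < 1)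
    (hL₂lt : ∀ i j : Fin m, (j : ℕ) < (i : ℕ) → |L₂ i j| < 1) :
    (∀ i j, sumIdx i < sumIdx j →
      (Matrix.fromBlocks L₁ 0 (-Real.tan θh • (P₂ * P₁ᵀ * L₁)) L₂) i j = 0) ∧
    (∀ i, (Matrix.fromBlocks L₁ 0 (-Real.tan θh • (P₂ * P₁ᵀ * L₁)) L₂) i i = 1) ∧
    (∀ i j, sumIdx j < sumIdx i →
      |(Matrix.fromBlocks L₁ 0 (-Real.tan θh • (P₂ * P₁ᵀ * L₁)) L₂) i j| < 1) := by
  have hc : Real.cos θh ≠ 0 := by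
    intro h
    rw [h] at hlt
    simp at hlt
    exact (abs_nonneg _).not_gt hlt
  have ht : |Real.tan θh| < 1 := by
    rw [Real.tan_eq_sin_div_cos, abs_div, div_lt_one (abs_pos.mpr hc)]
    exact hlt
  obtain ⟨σ, hσ⟩ := isPerm_mul_transpose hP₁ hP₂
  have habs : ∀ i j, |L₁ i j| ≤ 1 := by
    intro i j
    rcases lt_trichotomy (j : ℕ) (i : ℕ) with h | h | h
    · exact (hL₁lt i j h).le
    · have : j = i := Fin.ext h
      rw [this, hL₁diag]
      simp
    · simp [hL₁lower i j h]
  have hQL : ∀ i j, (P₂ * P₁ᵀ * L₁) i j = L₁ (σ.symm i) j := fun i j =>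
    perm_mul_apply hσ L₁ i j
  refine ⟨?_, ?_, ?_⟩
  · intro i j hij
    rcases i with i | i <;> rcases j with j | j <;>
      simp only [sumIdx] at hij <;>
      simp only [Matrix.fromBlocks_apply₁₁, Matrix.fromBlocks_apply₁₂,
        Matrix.fromBlocks_apply₂₁, Matrix.fromBlocks_apply₂₂, Matrix.zero_apply]
    · exact hL₁lower i j hij
    · exfalso; exact absurd hij (by omega)
    · exact hL₂lower i j (by omega)
  · intro i
    rcases i with i | i <;> simp [hL₁diag, hL₂diag]
  · intro i j hij
    rcases i with i | i <;> rcases j with j | j <;> simp only [sumIdx] at hij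
    · simpa using hL₁lt i j hij
    · exact absurd hij (by omega)
    · rw [Matrix.fromBlocks_apply₂₁, Matrix.smul_apply, hQL, smul_eq_mul, abs_mul, abs_neg]
      calc |Real.tan θh| * |L₁ (σ.symm i) j| ≤ |Real.tan θh| * 1 :=
            mul_le_mul_of_nonneg_left (habs _ _) (abs_nonneg _)
        _ = |Real.tan θh| := mul_one _
        _ < 1 := ht
    · simpa using hL₂lt i j (by omega)


/-- GEPP factorization of a (nonsimple) butterfly-type matrix
`B = (R_θ ⊗ I_m)(A₁ ⊕ A₂)`, given GEPP factorizations `Pₖ Aₖ = Lₖ Uₖ`. -/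
theorem gepp_butterfly_factorization
    (m : ℕ) (hm : 1 ≤ m) (θ : ℝ) (hθ : |Real.sin θ| ≠ |Real.cos θ|)
    (A₁ A₂ P₁ P₂ L₁ L₂ U₁ U₂ : Matrix (Fin m) (Fin m) ℝ)
    (hP₁ : IsPermMatrix P₁) (hP₂ : IsPermMatrix P₂)
    (hL₁lower : ∀ i j : Fin m, (i : ℕ) < (j : ℕ) → L₁ i j = 0)
    (hL₂lower : ∀ i j : Fin m, (i : ℕ) < (j : ℕ) → L₂ i j = 0)
    (hL₁diag : ∀ i, L₁ i i = 1) (hL₂diag : ∀ i, L₂ i i = 1)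
    (hL₁lt : ∀ i j : Fin m, (j : ℕ) < (i : ℕ) → |L₁ i j| < 1)
    (hL₂lt : ∀ i j : Fin m, (j : ℕ) < (i : ℕ) → |L₂ i j| < 1)
    (hU₁ : ∀ i j : Fin m, (j : ℕ) < (i : ℕ) → U₁ i j = 0)
    (hU₂ : ∀ i j : Fin m, (j : ℕ) < (i : ℕ) → U₂ i j = 0)
    (hA₁ : P₁ * A₁ = L₁ * U₁) (hA₂ : P₂ * A₂ = L₂ * U₂) :
    -- pivot indicator, pivoted angle, and 2×2 pivot permutation (⊗ I_m)
    let e : ℕ := if |Real.sin θ| > |Real.cos θ| then 1 else 0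
    let θh : ℝ := if |Real.sin θ| > |Real.cos θ| then Real.pi / 2 - θ else θ
    let Pθ : Matrix (Fin m ⊕ Fin m) (Fin m ⊕ Fin m) ℝ :=
      if |Real.sin θ| > |Real.cos θ| then Matrix.fromBlocks 0 1 1 0
      else Matrix.fromBlocks 1 0 0 1
    -- B = (R_θ ⊗ I_m) (A₁ ⊕ A₂)
    let B : Matrix (Fin m ⊕ Fin m) (Fin m ⊕ Fin m) ℝ :=
      Matrix.fromBlocks (Real.cos θ • (1 : Matrix (Fin m) (Fin m) ℝ))
          (Real.sin θ • (1 : Matrix (Fin m) (Fin m) ℝ))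
          (-Real.sin θ • (1 : Matrix (Fin m) (Fin m) ℝ))
          (Real.cos θ • (1 : Matrix (Fin m) (Fin m) ℝ)) *
        Matrix.fromBlocks A₁ 0 0 A₂
    -- P = (P₁ ⊕ P₂)(P_θ ⊗ I_m)
    let P : Matrix (Fin m ⊕ Fin m) (Fin m ⊕ Fin m) ℝ :=
      Matrix.fromBlocks P₁ 0 0 P₂ * Pθ
    -- L = [L₁, 0; −tan(θ̂)·P₂P₁ᵀL₁, L₂]
    let L : Matrix (Fin m ⊕ Fin m) (Fin m ⊕ Fin m) ℝ :=
      Matrix.fromBlocks L₁ 0 (-Real.tan θh • (P₂ * P₁ᵀ * L₁)) L₂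
    -- U = [(−1)^e cos(θ̂)·U₁, sin(θ̂)·L₁⁻¹P₁A₂; 0, (1/cos θ̂)·U₂]
    let U : Matrix (Fin m ⊕ Fin m) (Fin m ⊕ Fin m) ℝ :=
      Matrix.fromBlocks (((-1 : ℝ) ^ e * Real.cos θh) • U₁)
        (Real.sin θh • (L₁⁻¹ * P₁ * A₂)) 0 ((Real.cos θh)⁻¹ • U₂)
    P * B = L * U ∧
      IsPermMatrix P ∧
      (∀ i j, sumIdx i < sumIdx j → L i j = 0) ∧
      (∀ i, L i i = 1) ∧
      (∀ i j, sumIdx j < sumIdx i → |L i j| < 1) ∧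
      (∀ i j, sumIdx j < sumIdx i → U i j = 0) := by
  intro e θh Pθ B P L U
  have hinv : L₁ * L₁⁻¹ = 1 := unitLower_inv hL₁lower hL₁diag
  have hortho : P₁ᵀ * P₁ = 1 := perm_transpose_mul hP₁
  have hUzero : ∀ (a b : ℝ),
      (∀ i j, sumIdx j < sumIdx i →
        (Matrix.fromBlocks (a • U₁) (Real.sin θh • (L₁⁻¹ * P₁ * A₂)) 0 (b • U₂)) i j = 0) := by
    intro a b i j hij
    rcases i with i | i <;> rcases j with j | j <;> simp only [sumIdx] at hij
    · simp [hU₁ i j hij]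
    · exact absurd hij (by omega)
    · simp
    · simp [hU₂ i j (by omega)]
  by_cases hgt : |Real.sin θ| > |Real.cos θ|
  · -- pivoted case
    have hθh : θh = Real.pi / 2 - θ := if_pos hgt
    have hsin : Real.sin θh = Real.cos θ := by rw [hθh, Real.sin_pi_div_two_sub]
    have hcos : Real.cos θh = Real.sin θ := by rw [hθh, Real.cos_pi_div_two_sub]
    have hlt : |Real.sin θh| < |Real.cos θh| := by rw [hsin, hcos]; exact hgt
    have hc : Real.cos θh ≠ 0 := by
      intro h; rw [h] at hlt; simp at hlt; exact (abs_nonneg _).not_gt hlt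
    have he : e = 1 := if_pos hgt
    have hPθ : Pθ = Matrix.fromBlocks 0 1 1 0 := if_pos hgt
    have hP : P = Matrix.fromBlocks 0 P₁ P₂ 0 := by
      show Matrix.fromBlocks P₁ 0 0 P₂ * Pθ = _
      rw [hPθ]
      simp [Matrix.fromBlocks_multiply]
    obtain ⟨hz, hd, hb⟩ := L_struct hlt hP₁ hP₂ hL₁lower hL₂lower hL₁diag hL₂diag hL₁lt hL₂lt
    refine ⟨?_, ?_, hz, hd, hb, hUzero _ _⟩
    · have key := key_eq θh hc (-1) A₁ A₂ P₁ P₂ L₁ L₂ U₁ U₂ hinv hortho hA₁ hA₂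
      show P * B = _
      rw [hP]
      have hB : P * B = Matrix.fromBlocks ((-Real.sin θ) • (P₁ * A₁)) (Real.cos θ • (P₁ * A₂))
          (Real.cos θ • (P₂ * A₁)) (Real.sin θ • (P₂ * A₂)) := by
        show Matrix.fromBlocks P₁ 0 0 P₂ * Pθ *
          (Matrix.fromBlocks _ _ _ _ * Matrix.fromBlocks A₁ 0 0 A₂) = _
        rw [hPθ]
        simp [Matrix.fromBlocks_multiply, Matrix.smul_mul, Matrix.mul_smul]
      rw [hP] at hB
      rw [hB]
      simp only [neg_mul, one_mul, neg_neg, hsin, hcos] at key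
      rw [key]
      simp only [L, U, e, θh, hgt, if_true, gt_iff_lt]
      norm_num [Real.sin_pi_div_two_sub, Real.cos_pi_div_two_sub]
    · rw [hP]
      exact isPerm_blockAnti hP₁ hP₂
  · have hθh : θh = θ := if_neg hgt
    have hlt : |Real.sin θh| < |Real.cos θh| := by
      rw [hθh]; exact lt_of_le_of_ne (not_lt.mp hgt) hθ
    have hc : Real.cos θh ≠ 0 := by
      intro h; rw [h] at hlt; simp at hlt; exact (abs_nonneg _).not_gt hlt
    have he : e = 0 := if_neg hgt
    have hPθ : Pθ = Matrix.fromBlocks 1 0 0 1 := if_neg hgt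
    have hP : P = Matrix.fromBlocks P₁ 0 0 P₂ := by
      show Matrix.fromBlocks P₁ 0 0 P₂ * Pθ = _
      rw [hPθ]
      simp [Matrix.fromBlocks_multiply]
    obtain ⟨hz, hd, hb⟩ := L_struct hlt hP₁ hP₂ hL₁lower hL₂lower hL₁diag hL₂diag hL₁lt hL₂lt
    refine ⟨?_, ?_, hz, hd, hb, hUzero _ _⟩
    · have key := key_eq θh hc 1 A₁ A₂ P₁ P₂ L₁ L₂ U₁ U₂ hinv hortho hA₁ hA₂
      show P * B = _
      have hB : P * B = Matrix.fromBlocks (Real.cos θ • (P₁ * A₁)) (Real.sin θ • (P₁ * A₂))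
          ((-Real.sin θ) • (P₂ * A₁)) (Real.cos θ • (P₂ * A₂)) := by
        show Matrix.fromBlocks P₁ 0 0 P₂ * Pθ *
          (Matrix.fromBlocks _ _ _ _ * Matrix.fromBlocks A₁ 0 0 A₂) = _
        rw [hPθ]
        simp [Matrix.fromBlocks_multiply, Matrix.smul_mul, Matrix.mul_smul]
      rw [hB]
      rw [hθh] at key
      simp only [one_mul] at key
      rw [key]
      simp only [L, U, e, θh, hgt, if_false, gt_iff_lt, pow_zero, one_mul]
    · rw [hP]
      exact isPerm_blockDiag hP₁ hP₂
end

section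
/- Let p be a prime and n ≥ 1. The set B_n^{(p)} of nonsimple p-nary butterfly permutations is a subgroup of the symmetric group on p^n letters of cardinality p^{(p^n − 1)/(p − 1)}; since (p^n − 1)/(p − 1) equals the exponent of p in the prime factorization of (p^n)!, B_n^{(p)} is a Sylow p-subgroup of S_{p^n}. -/
/-- Kronecker product of permutations: `(i, r) ↦ (σ i, π r)` under the
row-major identification `Fin (a * b) ≃ Fin a × Fin b`. -/
def permKron {a b : ℕ} (σ : Equiv.Perm (Fin a)) (π : Equiv.Perm (Fin b)) :
    Equiv.Perm (Fin (a * b)) :=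
  finProdFinEquiv.symm.trans ((Equiv.prodCongr σ π).trans finProdFinEquiv)

/-- Direct (block) sum of permutations: `(i, r) ↦ (i, π i r)`. -/
def permBlockSum {a b : ℕ} (π : Fin a → Equiv.Perm (Fin b)) :
    Equiv.Perm (Fin (a * b)) :=
  finProdFinEquiv.symm.trans ((Equiv.prodCongrRight π).trans finProdFinEquiv)

/-- The simple `m`-nary butterfly permutations of `Fin (m ^ n)`:
Kronecker products `τ^{a₁} ⊗ ⋯ ⊗ τ^{aₙ}` of powers of the standard `m`-cycle `τ = finRotate m`. -/
def simpleButterfly (m : ℕ) : (n : ℕ) → Set (Equiv.Perm (Fin (m ^ n)))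
  | 0 => {1}
  | n + 1 =>
    {σ | ∃ (a : ℤ) (π : Equiv.Perm (Fin (m ^ n))), π ∈ simpleButterfly m n ∧
      σ = (finCongr (pow_succ' m n).symm).permCongr (permKron (finRotate m ^ a) π)}

/-- The nonsimple `m`-nary butterfly permutations of `Fin (m ^ n)`:
`B₀ = {1}`, `B_{n+1} = {(τ^a ⊗ id) ∘ (σ₁ ⊕ ⋯ ⊕ σ_m) : σᵢ ∈ B_n}`. -/
def nonsimpleButterfly (m : ℕ) : (n : ℕ) → Set (Equiv.Perm (Fin (m ^ n)))
  | 0 => {1}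
  | n + 1 =>
    {σ | ∃ (a : ℤ) (π : Fin m → Equiv.Perm (Fin (m ^ n))),
      (∀ i, π i ∈ nonsimpleButterfly m n) ∧
      σ = (finCongr (pow_succ' m n).symm).permCongr
        (permKron (finRotate m ^ a) 1 * permBlockSum π)}

/-- The length of the longest increasing subsequence of a permutation. -/
noncomputable def LIS {M : ℕ} (σ : Equiv.Perm (Fin M)) : ℕ :=
  sSup {k | ∃ t : Finset (Fin M), t.card = k ∧ StrictMonoOn (⇑σ) ↑t}

/-- The length of the longest decreasing subsequence of a permutation. -/
noncomputable def LDS {M : ℕ} (σ : Equiv.Perm (Fin M)) : ℕ :=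
  sSup {k | ∃ t : Finset (Fin M), t.card = k ∧ StrictAntiOn (⇑σ) ↑t}

/-- The number of cycles in the disjoint cycle decomposition of `σ`,
counting fixed points as cycles of length 1. -/
def numCycles {M : ℕ} (σ : Equiv.Perm (Fin M)) : ℕ :=
  Multiset.card σ.cycleType + (Finset.univ.filter fun x => σ x = x).card

/-- The number of fixed points of `σ`. -/
def numFixed {M : ℕ} (σ : Equiv.Perm (Fin M)) : ℕ :=
  (Finset.univ.filter fun x => σ x = x).card

open Equiv Finset

private lemma permCongr_mul' {α β : Type*} (e : α ≃ β) (f g : Perm α) :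
    e.permCongr (f * g) = e.permCongr f * e.permCongr g := by
  ext x; simp [Equiv.permCongr_apply, Equiv.Perm.mul_apply]

private lemma kron_blockSum_apply {m b : ℕ} (σ : Perm (Fin m)) (π : Fin m → Perm (Fin b))
    (i : Fin m) (r : Fin b) :
    (permKron σ 1 * permBlockSum π : Perm (Fin (m * b))) (finProdFinEquiv (i, r)) = finProdFinEquiv (σ i, π i r) := by
  simp [permKron, permBlockSum, Equiv.Perm.mul_apply]

private lemma kron_one_mul_blockSum_mul {m b : ℕ} (σ σ' : Perm (Fin m))
    (π π' : Fin m → Perm (Fin b)) :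
    (permKron σ 1 * permBlockSum π) * (permKron σ' 1 * permBlockSum π') =
    permKron (σ * σ') 1 * permBlockSum (fun i => π (σ' i) * π' i) := by
  ext x
  obtain ⟨⟨i, r⟩, rfl⟩ := finProdFinEquiv.surjective x
  simp [permKron, permBlockSum, Equiv.Perm.mul_apply]

/-- The basic building block of butterfly permutations. -/
def layer (m n : ℕ) (a : ℤ) (π : Fin m → Perm (Fin (m ^ n))) : Perm (Fin (m ^ (n + 1))) :=
  (finCongr (pow_succ' m n).symm).permCongr
    (permKron (finRotate m ^ a) 1 * permBlockSum π)

lemma layer_mul {m n : ℕ} (a c : ℤ) (π ρ : Fin m → Perm (Fin (m ^ n))) :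
    layer m n a π * layer m n c ρ =
      layer m n (a + c) (fun i => π ((finRotate m ^ c) i) * ρ i) := by
  unfold layer
  rw [← permCongr_mul', kron_one_mul_blockSum_mul, ← zpow_add]

lemma layer_one (m n : ℕ) : layer m n 0 (fun _ => 1) = 1 := by
  ext x
  simp [layer, permKron, permBlockSum, Equiv.permCongr_apply, Nat.mod_add_div]

lemma layer_inv {m n : ℕ} (a : ℤ) (π : Fin m → Perm (Fin (m ^ n))) :
    (layer m n a π)⁻¹ =
      layer m n (-a) (fun i => (π ((finRotate m ^ (-a)) i))⁻¹) := by
  apply inv_eq_of_mul_eq_one_right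
  rw [layer_mul]
  have h1 : (fun i => π ((finRotate m ^ (-a)) i) * (π ((finRotate m ^ (-a)) i))⁻¹) =
      (fun _ : Fin m => (1 : Perm (Fin (m ^ n)))) := by
    funext i; simp
  rw [add_neg_cancel, h1, layer_one]

lemma mem_B_succ_iff {m n : ℕ} {σ : Perm (Fin (m ^ (n + 1)))} :
    σ ∈ nonsimpleButterfly m (n + 1) ↔
      ∃ (a : ℤ) (π : Fin m → Perm (Fin (m ^ n))),
        (∀ i, π i ∈ nonsimpleButterfly m n) ∧ σ = layer m n a π := by
  rw [nonsimpleButterfly]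
  rfl

lemma mem_B_zero_iff {m : ℕ} {σ : Perm (Fin (m ^ 0))} :
    σ ∈ nonsimpleButterfly m 0 ↔ σ = 1 := by
  rw [nonsimpleButterfly]
  rfl

lemma one_mem_B (m : ℕ) : ∀ n, (1 : Perm (Fin (m ^ n))) ∈ nonsimpleButterfly m n := by
  intro n
  induction n with
  | zero => exact mem_B_zero_iff.mpr rfl
  | succ n ih => exact mem_B_succ_iff.mpr ⟨0, fun _ => 1, fun _ => ih, (layer_one m n).symm⟩

lemma mul_mem_B (m : ℕ) : ∀ n, ∀ σ τ : Perm (Fin (m ^ n)),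
    σ ∈ nonsimpleButterfly m n → τ ∈ nonsimpleButterfly m n →
    σ * τ ∈ nonsimpleButterfly m n := by
  intro n
  induction n with
  | zero =>
    intro σ τ hσ hτ
    rw [mem_B_zero_iff] at hσ hτ ⊢
    rw [hσ, hτ, one_mul]
  | succ n ih =>
    intro σ τ hσ hτ
    rw [mem_B_succ_iff] at hσ hτ ⊢
    obtain ⟨a, π, hπ, rfl⟩ := hσ
    obtain ⟨c, ρ, hρ, rfl⟩ := hτ
    exact ⟨a + c, fun i => π ((finRotate m ^ c) i) * ρ i,
      fun i => ih _ _ (hπ _) (hρ _), (layer_mul a c π ρ)⟩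

lemma inv_mem_B (m : ℕ) : ∀ n, ∀ σ : Perm (Fin (m ^ n)),
    σ ∈ nonsimpleButterfly m n → σ⁻¹ ∈ nonsimpleButterfly m n := by
  intro n
  induction n with
  | zero =>
    intro σ hσ
    rw [mem_B_zero_iff] at hσ ⊢
    rw [hσ, inv_one]
  | succ n ih =>
    intro σ hσ
    rw [mem_B_succ_iff] at hσ ⊢
    obtain ⟨a, π, hπ, rfl⟩ := hσ
    exact ⟨-a, fun i => (π ((finRotate m ^ (-a)) i))⁻¹,
      fun i => ih _ (hπ _), layer_inv a π⟩

lemma orderOf_finRotate' (m : ℕ) (hm : 2 ≤ m) : orderOf (finRotate m) = m := by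
  match m, hm with
  | (k + 2), _ =>
    rw [Equiv.Perm.IsCycle.orderOf isCycle_finRotate, support_finRotate, Finset.card_univ,
      Fintype.card_fin]

lemma zpow_finRotate_norm {m : ℕ} (hm : 2 ≤ m) (a : ℤ) :
    finRotate m ^ a = finRotate m ^ ((a % (m : ℤ)).toNat) ∧ (a % (m : ℤ)).toNat < m := by
  have hord := orderOf_finRotate' m hm
  have h0 : (0 : ℤ) < (m : ℤ) := by exact_mod_cast Nat.lt_of_lt_of_le Nat.zero_lt_two hm
  have hmod : 0 ≤ a % (m : ℤ) := Int.emod_nonneg a (by omega)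
  have hlt : a % (m : ℤ) < (m : ℤ) := Int.emod_lt_of_pos a h0
  constructor
  · calc finRotate m ^ a
        = finRotate m ^ (a % (orderOf (finRotate m) : ℤ)) := (zpow_mod_orderOf _ _).symm
      _ = finRotate m ^ (a % (m : ℤ)) := by rw [hord]
      _ = finRotate m ^ ((a % (m : ℤ)).toNat) := by
          rw [← zpow_natCast, Int.toNat_of_nonneg hmod]
  · omega

lemma card_B (p : ℕ) (hp : 2 ≤ p) :
    ∀ n, Nat.card (nonsimpleButterfly p n) = p ^ (∑ j ∈ Finset.range n, p ^ j) := by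
  intro n
  induction n with
  | zero =>
    have h : nonsimpleButterfly p 0 = {1} := by rw [nonsimpleButterfly]
    rw [h, Nat.card_coe_set_eq, Set.ncard_singleton, Finset.range_zero, Finset.sum_empty,
      pow_zero]
  | succ n ih =>
    have hbpos : 0 < p ^ n := Nat.pow_pos (by omega)
    let F : Fin p × (Fin p → ↥(nonsimpleButterfly p n)) → ↥(nonsimpleButterfly p (n + 1)) :=
      fun x => ⟨layer p n ((x.1 : ℕ) : ℤ) (fun i => (x.2 i : Perm (Fin (p ^ n)))),
        mem_B_succ_iff.mpr ⟨_, _, fun i => (x.2 i).2, rfl⟩⟩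
    have hF : Function.Bijective F := by
      constructor
      · rintro ⟨a, π⟩ ⟨c, ρ⟩ h
        have h' : layer p n ((a : ℕ) : ℤ) (fun i => (π i : Perm (Fin (p ^ n)))) =
            layer p n ((c : ℕ) : ℤ) (fun i => (ρ i : Perm (Fin (p ^ n)))) :=
          congrArg Subtype.val h
        simp only [layer] at h'
        have h2 := (Equiv.permCongr (finCongr (pow_succ' p n).symm)).injective h'
        have key : ∀ (i : Fin p) (r : Fin (p ^ n)),
            ((finRotate p ^ ((a : ℕ) : ℤ)) i, (π i : Perm (Fin (p ^ n))) r) =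
            ((finRotate p ^ ((c : ℕ) : ℤ)) i, (ρ i : Perm (Fin (p ^ n))) r) := by
          intro i r
          have h3 := congrArg (fun g : Perm (Fin (p * p ^ n)) => g (finProdFinEquiv (i, r))) h2
          simp only [kron_blockSum_apply] at h3
          exact finProdFinEquiv.injective h3
        have r0 : Fin (p ^ n) := ⟨0, hbpos⟩
        have ha : finRotate p ^ (a : ℕ) = finRotate p ^ (c : ℕ) := by
          ext i
          have := congrArg Prod.fst (key i r0)
          simpa [zpow_natCast] using congrArg Fin.val this
        have hac : (a : ℕ) = (c : ℕ) := by
          refine pow_injOn_Iio_orderOf ?_ ?_ ha <;>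
            · rw [Set.mem_Iio, orderOf_finRotate' p hp]; exact Fin.is_lt _
        have hπρ : π = ρ := by
          funext i
          apply Subtype.ext
          apply Equiv.ext
          intro r
          exact congrArg Prod.snd (key i r)
        exact Prod.ext (Fin.ext hac) hπρ
      · rintro ⟨σ, hσ⟩
        obtain ⟨a, π, hπ, rfl⟩ := mem_B_succ_iff.mp hσ
        obtain ⟨hz, hlt⟩ := zpow_finRotate_norm hp a
        refine ⟨⟨⟨(a % (p : ℤ)).toNat, hlt⟩, fun i => ⟨π i, hπ i⟩⟩, ?_⟩
        apply Subtype.ext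
        show layer p n (((a % (p : ℤ)).toNat : ℕ) : ℤ) _ = layer p n a π
        unfold layer
        rw [show finRotate p ^ (((a % (p : ℤ)).toNat : ℕ) : ℤ) = finRotate p ^ a from by
          rw [zpow_natCast, ← hz]]
    have hcards := Nat.card_eq_of_bijective F hF
    rw [← hcards, Nat.card_prod, Nat.card_fun, Nat.card_eq_fintype_card (α := Fin p),
      Fintype.card_fin, ih, ← pow_mul, ← pow_succ']
    congr 1
    rw [Finset.sum_range_succ', pow_zero, Finset.sum_mul]
    simp [pow_succ]


/-- The nonsimple `p`-nary butterfly permutations form a subgroup of `S_{p^n}` of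
cardinality `p^{(pⁿ−1)/(p−1)}`; since `(pⁿ−1)/(p−1)` is the exponent of `p` in `(pⁿ)!`,
this subgroup is a Sylow `p`-subgroup of `S_{p^n}`. -/
theorem nonsimpleButterfly_is_sylow (p n : ℕ) (hp : p.Prime) (hn : 1 ≤ n) :
    ∃ H : Subgroup (Equiv.Perm (Fin (p ^ n))),
      (H : Set (Equiv.Perm (Fin (p ^ n)))) = nonsimpleButterfly p n ∧
      Nat.card H = p ^ ((p ^ n - 1) / (p - 1)) ∧
      (p ^ n - 1) / (p - 1) = (Nat.factorial (p ^ n)).factorization p ∧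
      ∃ S : Sylow p (Equiv.Perm (Fin (p ^ n))),
        (S : Subgroup (Equiv.Perm (Fin (p ^ n)))) = H := by
  haveI : Fact p.Prime := ⟨hp⟩
  have hp2 := hp.two_le
  have hgeo : ∑ j ∈ Finset.range n, p ^ j = (p ^ n - 1) / (p - 1) := Nat.geomSum_eq hp2 n
  have hcard : Nat.card ↥(nonsimpleButterfly p n) = p ^ ((p ^ n - 1) / (p - 1)) := by
    rw [← hgeo]; exact card_B p hp2 n
  have hfac : (p ^ n - 1) / (p - 1) = (Nat.factorial (p ^ n)).factorization p := by
    rw [← hgeo, Nat.factorization_def _ hp,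
      padicValNat_factorial (b := n + 1) (by rw [Nat.log_pow hp.one_lt]; omega)]
    rw [Finset.sum_Ico_eq_sum_range]
    simp only [Nat.add_sub_cancel]
    rw [← Finset.sum_range_reflect]
    refine Finset.sum_congr rfl fun i hi => ?_
    have hin := Finset.mem_range.mp hi
    rw [Nat.pow_div (by omega) (by omega)]
    congr 1
    omega
  set H : Subgroup (Equiv.Perm (Fin (p ^ n))) :=
    { carrier := nonsimpleButterfly p n
      one_mem' := one_mem_B p n
      mul_mem' := fun ha hb => mul_mem_B p n _ _ ha hb
      inv_mem' := fun ha => inv_mem_B p n _ ha } with hH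
  have hcardH : Nat.card H = p ^ ((p ^ n - 1) / (p - 1)) := hcard
  refine ⟨H, rfl, hcardH, hfac, ⟨Sylow.ofCard H ?_, rfl⟩⟩
  rw [Nat.card_eq_fintype_card (α := Equiv.Perm (Fin (p ^ n))), Fintype.card_perm, Fintype.card_fin, ← hfac]
  exact hcardH
end

section
/- Let N = 2^n with n ≥ 0. For every σ in the simple binary butterfly group B_{s,N}, L(σ) is a power of 2, and for each 0 ≤ k ≤ n the number of σ ∈ B_{s,N} with L(σ) = 2^k equals the binomial coefficient C(n,k). Equivalently, for σ drawn uniformly from B_{s,N}, log₂ L(σ) has the Binomial(n, 1/2) distribution. -/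
lemma lis_bdd {M : ℕ} (σ : Equiv.Perm (Fin M)) :
    BddAbove {k | ∃ t : Finset (Fin M), t.card = k ∧ StrictMonoOn (⇑σ) ↑t} :=
  ⟨M, fun k ⟨t, ht, _⟩ => ht ▸ (t.card_le_univ.trans_eq (by simp))⟩

lemma le_LIS {M : ℕ} (σ : Equiv.Perm (Fin M)) (t : Finset (Fin M))
    (h : StrictMonoOn (⇑σ) ↑t) : t.card ≤ LIS σ :=
  le_csSup (lis_bdd σ) ⟨t, rfl, h⟩

lemma lis_ne {M : ℕ} (σ : Equiv.Perm (Fin M)) :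
    {k | ∃ t : Finset (Fin M), t.card = k ∧ StrictMonoOn (⇑σ) ↑t}.Nonempty :=
  ⟨0, ∅, by simp, fun x hx => absurd hx (by simp)⟩

lemma LIS_spec {M : ℕ} (σ : Equiv.Perm (Fin M)) :
    ∃ t : Finset (Fin M), t.card = LIS σ ∧ StrictMonoOn (⇑σ) ↑t :=
  Nat.sSup_mem (lis_ne σ) (lis_bdd σ)

lemma LIS_le {M : ℕ} (σ : Equiv.Perm (Fin M)) (L : ℕ)
    (h : ∀ t : Finset (Fin M), StrictMonoOn (⇑σ) ↑t → t.card ≤ L) : LIS σ ≤ L :=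
  csSup_le (lis_ne σ) (fun k ⟨t, ht, hm⟩ => ht ▸ h t hm)

lemma LIS_one {M : ℕ} : LIS (1 : Equiv.Perm (Fin M)) = M := by
  apply le_antisymm
  · exact LIS_le _ _ fun t _ => t.card_le_univ.trans_eq (by simp)
  · have := le_LIS (1 : Equiv.Perm (Fin M)) Finset.univ (fun x _ y _ h => by simpa using h)
    simpa using this

lemma LIS_permCongr {M M' : ℕ} (h : M = M') (σ : Equiv.Perm (Fin M)) :
    LIS ((finCongr h).permCongr σ) = LIS σ := by
  subst h
  simp
  congr 1


lemma permKron_apply_val {a b : ℕ} (σ : Equiv.Perm (Fin a)) (π : Equiv.Perm (Fin b))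
    (x : Fin (a * b)) :
    ((permKron σ π x : Fin (a*b)) : ℕ) = (π x.modNat : ℕ) + b * (σ x.divNat : ℕ) := by
  simp [permKron, finProdFinEquiv]

lemma permKron_apply_prod {a b : ℕ} (σ : Equiv.Perm (Fin a)) (π : Equiv.Perm (Fin b))
    (i : Fin a) (r : Fin b) :
    permKron σ π (finProdFinEquiv (i, r)) = finProdFinEquiv (σ i, π r) := by
  simp [permKron]

-- value formula in block form, for a = 2
lemma permKron_val2 {b : ℕ} (hb : 0 < b) (σ2 : Equiv.Perm (Fin 2)) (π : Equiv.Perm (Fin b))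
    (x : Fin (2 * b)) :
    ((permKron σ2 π x : Fin (2*b)) : ℕ)
      = (π ⟨(x : ℕ) % b, Nat.mod_lt _ hb⟩ : ℕ)
        + b * (σ2 ⟨(x : ℕ) / b, by have := x.isLt; exact Nat.div_lt_of_lt_mul (by omega)⟩ : ℕ) := by
  rw [permKron_apply_val]
  have h1 : x.modNat = ⟨(x : ℕ) % b, Nat.mod_lt _ hb⟩ := Fin.ext (Fin.coe_modNat x)
  have h2 : x.divNat = ⟨(x : ℕ) / b, by have := x.isLt; exact Nat.div_lt_of_lt_mul (by omega)⟩ :=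
    Fin.ext (Fin.coe_divNat x)
  rw [h1, h2]

lemma permKron_val_block {b : ℕ} (hb : 0 < b) (σ2 : Equiv.Perm (Fin 2)) (π : Equiv.Perm (Fin b))
    (d : ℕ) (hd : d < 2) (x : Fin (2 * b)) (hx : (x : ℕ) / b = d) :
    ((permKron σ2 π x : Fin (2*b)) : ℕ)
      = (π ⟨(x : ℕ) % b, Nat.mod_lt _ hb⟩ : ℕ) + b * (σ2 ⟨d, hd⟩ : ℕ) := by
  subst hx
  exact permKron_val2 hb σ2 π x

def fmod {b : ℕ} (hb : 0 < b) (x : Fin (2 * b)) : Fin b :=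
  ⟨(x : ℕ) % b, Nat.mod_lt _ hb⟩

lemma permKron_val_block' {b : ℕ} (hb : 0 < b) (σ2 : Equiv.Perm (Fin 2)) (π : Equiv.Perm (Fin b))
    (d : ℕ) (hd : d < 2) (x : Fin (2 * b)) (hx : (x : ℕ) / b = d) :
    ((permKron σ2 π x : Fin (2*b)) : ℕ)
      = (π (fmod hb x) : ℕ) + b * (σ2 ⟨d, hd⟩ : ℕ) := by
  subst hx
  exact permKron_val2 hb σ2 π x

lemma blk_decomp {b : ℕ} (hb : 0 < b) {d : ℕ} (x : Fin (2 * b)) (hx : (x : ℕ) / b = d) :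
    (x : ℕ) = b * d + (x : ℕ) % b := by
  conv_lhs => rw [← Nat.div_add_mod (x : ℕ) b, hx]

lemma block_card_le {b : ℕ} (hb : 0 < b) (σ2 : Equiv.Perm (Fin 2)) (π : Equiv.Perm (Fin b))
    (d : ℕ) (t : Finset (Fin (2 * b)))
    (hm : StrictMonoOn (⇑(permKron σ2 π)) ↑t)
    (hblk : ∀ x ∈ t, (x : ℕ) / b = d) :
    t.card ≤ LIS π := by
  classical
  rcases t.eq_empty_or_nonempty with rfl | ⟨x₀, hx₀⟩
  · simp
  have hd : d < 2 := by
    rw [← hblk x₀ hx₀]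
    exact Nat.div_lt_of_lt_mul (by have := x₀.isLt; omega)
  have hinj : Set.InjOn (fmod hb) ↑t := by
    intro x hx y hy hxy
    have hv : (x : ℕ) % b = (y : ℕ) % b := congrArg Fin.val hxy
    have ex := blk_decomp hb x (hblk x hx)
    have ey := blk_decomp hb y (hblk y hy)
    exact Fin.ext (by omega)
  have hcard : (t.image (fmod hb)).card = t.card := Finset.card_image_of_injOn hinj
  refine hcard ▸ le_LIS π (t.image (fmod hb)) ?_
  intro m1 hm1 m2 hm2 hlt
  simp only [Finset.coe_image, Set.mem_image, Finset.mem_coe] at hm1 hm2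
  obtain ⟨x, hx, rfl⟩ := hm1
  obtain ⟨y, hy, rfl⟩ := hm2
  have hlt' : (x : ℕ) % b < (y : ℕ) % b := hlt
  have ex := blk_decomp hb x (hblk x hx)
  have ey := blk_decomp hb y (hblk y hy)
  have hxy : x < y := Fin.lt_def.mpr (by omega)
  have hval : ((permKron σ2 π x : Fin (2*b)) : ℕ) < ((permKron σ2 π y : Fin (2*b)) : ℕ) :=
    hm hx hy hxy
  rw [permKron_val_block' hb σ2 π d hd x (hblk x hx),
      permKron_val_block' hb σ2 π d hd y (hblk y hy)] at hval
  exact Fin.lt_def.mpr (by omega)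

/-- the embedding of `Fin b` into block `d` of `Fin (2*b)` -/
def blkEmb (b d : ℕ) (hd : d < 2) (r : Fin b) : Fin (2 * b) :=
  ⟨b * d + (r : ℕ), by have := r.isLt; nlinarith⟩

lemma blkEmb_val {b d : ℕ} (hd : d < 2) (r : Fin b) :
    ((blkEmb b d hd r : Fin (2*b)) : ℕ) = b * d + (r : ℕ) := rfl

lemma blkEmb_div {b d : ℕ} (hb : 0 < b) (hd : d < 2) (r : Fin b) :
    ((blkEmb b d hd r : Fin (2*b)) : ℕ) / b = d := by
  rw [blkEmb_val, Nat.mul_add_div hb, Nat.div_eq_of_lt r.isLt, Nat.add_zero]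

lemma blkEmb_mod {b d : ℕ} (hb : 0 < b) (hd : d < 2) (r : Fin b) :
    fmod hb (blkEmb b d hd r) = r := by
  apply Fin.ext
  show ((blkEmb b d hd r : Fin (2*b)) : ℕ) % b = (r : ℕ)
  rw [blkEmb_val, Nat.mul_add_mod, Nat.mod_eq_of_lt r.isLt]

lemma permKron_blkEmb_val {b : ℕ} (hb : 0 < b) (σ2 : Equiv.Perm (Fin 2)) (π : Equiv.Perm (Fin b))
    {d : ℕ} (hd : d < 2) (r : Fin b) :
    ((permKron σ2 π (blkEmb b d hd r) : Fin (2*b)) : ℕ) = (π r : ℕ) + b * (σ2 ⟨d, hd⟩ : ℕ) := by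
  rw [permKron_val_block' hb σ2 π d hd _ (blkEmb_div hb hd r), blkEmb_mod hb hd r]

lemma blkEmb_injective {b d : ℕ} (hd : d < 2) : Function.Injective (blkEmb b d hd) :=
  fun r s h => Fin.ext (by have := congrArg Fin.val h; simp only [blkEmb_val] at this; omega)

lemma finRotate_two_val : ∀ i : Fin 2, (finRotate 2 i).val = 1 - i.val := by decide

lemma le_LIS_permKron {b : ℕ} (hb : 0 < b) (σ2 : Equiv.Perm (Fin 2)) (π : Equiv.Perm (Fin b)) :
    LIS π ≤ LIS (permKron σ2 π) := by
  classical
  obtain ⟨t, hc, hmono⟩ := LIS_spec π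
  have h0 : (0 : ℕ) < 2 := by omega
  have hinj := blkEmb_injective (b := b) h0
  have hcard : (t.image (blkEmb b 0 h0)).card = LIS π := by
    rw [Finset.card_image_of_injective _ hinj, hc]
  refine hcard ▸ le_LIS _ _ ?_
  intro x hx y hy hxy
  simp only [Finset.coe_image, Set.mem_image, Finset.mem_coe] at hx hy
  obtain ⟨r, hr, rfl⟩ := hx
  obtain ⟨s, hs, rfl⟩ := hy
  have hrs : r < s := by
    have := Fin.lt_def.mp hxy
    simp only [blkEmb_val] at this
    exact Fin.lt_def.mpr (by omega)
  have hps := Fin.lt_def.mp (hmono hr hs hrs)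
  apply Fin.lt_def.mpr
  rw [permKron_blkEmb_val hb σ2 π h0 r, permKron_blkEmb_val hb σ2 π h0 s]
  omega

lemma LIS_permKron_one {b : ℕ} (hb : 0 < b) (π : Equiv.Perm (Fin b)) :
    LIS (permKron (1 : Equiv.Perm (Fin 2)) π) = 2 * LIS π := by
  classical
  have h0 : (0 : ℕ) < 2 := by omega
  have h1 : (1 : ℕ) < 2 := by omega
  apply le_antisymm
  · -- upper bound
    apply LIS_le
    intro t hm
    have hsplit := Finset.card_filter_add_card_filter_not
      (s := t) (p := fun x => x.val / b = 0)
    have hc0 : (t.filter fun x => x.val / b = 0).card ≤ LIS π := by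
      apply block_card_le hb _ π 0 _ (hm.mono (Finset.coe_subset.mpr (Finset.filter_subset _ t)))
      intro x hx
      exact (Finset.mem_filter.mp hx).2
    have hc1 : (t.filter fun x => ¬(x.val / b = 0)).card ≤ LIS π := by
      apply block_card_le hb _ π 1 _ (hm.mono (Finset.coe_subset.mpr (Finset.filter_subset _ t)))
      intro x hx
      have h2 : ¬((x : ℕ) / b = 0) := (Finset.mem_filter.mp hx).2
      have h3 : (x : ℕ) / b < 2 := Nat.div_lt_of_lt_mul (by have := x.isLt; omega)
      generalize hq : (x : ℕ) / b = q at h2 h3 ⊢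
      omega
    omega
  · -- lower bound
    obtain ⟨t, hc, hmono⟩ := LIS_spec π
    set s : Finset (Fin (2 * b)) := t.image (blkEmb b 0 h0) ∪ t.image (blkEmb b 1 h1) with hs
    have hdisj : Disjoint (t.image (blkEmb b 0 h0)) (t.image (blkEmb b 1 h1)) := by
      rw [Finset.disjoint_left]
      intro x hx hx'
      simp only [Finset.mem_image] at hx hx'
      obtain ⟨r, _, rfl⟩ := hx
      obtain ⟨q, _, hq⟩ := hx'
      have := congrArg Fin.val hq
      simp only [blkEmb_val] at this
      have := r.isLt; have := q.isLt
      omega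
    have hcard : s.card = 2 * LIS π := by
      rw [hs, Finset.card_union_of_disjoint hdisj,
        Finset.card_image_of_injective _ (blkEmb_injective h0),
        Finset.card_image_of_injective _ (blkEmb_injective h1), hc]
      omega
    refine hcard ▸ le_LIS _ s ?_
    intro x hx y hy hxy
    have hval1 : ((1 : Equiv.Perm (Fin 2)) ⟨0, h0⟩ : ℕ) = 0 := rfl
    have hval2 : ((1 : Equiv.Perm (Fin 2)) ⟨1, h1⟩ : ℕ) = 1 := rfl
    simp only [hs, Finset.coe_union, Set.mem_union, Finset.coe_image, Set.mem_image,
      Finset.mem_coe] at hx hy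
    apply Fin.lt_def.mpr
    rcases hx with ⟨r, hr, rfl⟩ | ⟨r, hr, rfl⟩ <;> rcases hy with ⟨q, hq, rfl⟩ | ⟨q, hq, rfl⟩ <;>
      rw [permKron_blkEmb_val hb _ π _ r, permKron_blkEmb_val hb _ π _ q] <;>
      simp only [hval1, hval2] <;>
      have hxy' := Fin.lt_def.mp hxy <;> simp only [blkEmb_val] at hxy'
    · -- block 0 → block 0
      have hrq : r < q := Fin.lt_def.mpr (by omega)
      have := Fin.lt_def.mp (hmono hr hq hrq)
      omega
    · -- block 0 → block 1
      have := (π r).isLt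
      omega
    · -- block 1 → block 0 : impossible
      have := q.isLt
      omega
    · -- block 1 → block 1
      have hrq : r < q := Fin.lt_def.mpr (by omega)
      have := Fin.lt_def.mp (hmono hr hq hrq)
      omega

lemma LIS_permKron_rot {b : ℕ} (hb : 0 < b) (π : Equiv.Perm (Fin b)) :
    LIS (permKron (finRotate 2) π) = LIS π := by
  classical
  apply le_antisymm
  · apply LIS_le
    intro t hm
    have hsplit := Finset.card_filter_add_card_filter_not
      (s := t) (p := fun x => x.val / b = 0)
    have hc0 : (t.filter fun x => x.val / b = 0).card ≤ LIS π := by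
      apply block_card_le hb _ π 0 _ (hm.mono (Finset.coe_subset.mpr (Finset.filter_subset _ t)))
      intro x hx
      exact (Finset.mem_filter.mp hx).2
    have hc1 : (t.filter fun x => ¬(x.val / b = 0)).card ≤ LIS π := by
      apply block_card_le hb _ π 1 _ (hm.mono (Finset.coe_subset.mpr (Finset.filter_subset _ t)))
      intro x hx
      have h2 : ¬((x : ℕ) / b = 0) := (Finset.mem_filter.mp hx).2
      have h3 : (x : ℕ) / b < 2 := Nat.div_lt_of_lt_mul (by have := x.isLt; omega)
      generalize hq : (x : ℕ) / b = q at h2 h3 ⊢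
      omega
    -- one of the two blocks is empty
    rcases (t.filter fun x => x.val / b = 0).eq_empty_or_nonempty with he | ⟨x, hxm⟩
    · rw [he] at hsplit; simp only [Finset.card_empty, zero_add, add_zero] at hsplit; omega
    rcases (t.filter fun x => ¬(x.val / b = 0)).eq_empty_or_nonempty with he | ⟨y, hym⟩
    · rw [he] at hsplit; simp only [Finset.card_empty, zero_add, add_zero] at hsplit; omega
    exfalso
    have hx := Finset.mem_filter.mp hxm
    have hy := Finset.mem_filter.mp hym
    have hdx : (x : ℕ) / b = 0 := hx.2
    have hdy : (y : ℕ) / b = 1 := by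
      have h3 : (y : ℕ) / b < 2 := Nat.div_lt_of_lt_mul (by have := y.isLt; omega)
      have h4 : ¬((y : ℕ) / b = 0) := hy.2
      generalize hq : (y : ℕ) / b = q at h3 h4 ⊢
      omega
    have ex := blk_decomp hb x hdx
    have ey := blk_decomp hb y hdy
    have hxy : x < y := Fin.lt_def.mpr (by have := Nat.mod_lt (x:ℕ) hb; omega)
    have hval := Fin.lt_def.mp (hm hx.1 hy.1 hxy)
    rw [permKron_val_block' hb _ π 0 (by omega) x hdx,
        permKron_val_block' hb _ π 1 (by omega) y hdy] at hval
    have e0 : (finRotate 2 ⟨0, by omega⟩).val = 1 := finRotate_two_val _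
    have e1 : (finRotate 2 ⟨1, by omega⟩).val = 0 := finRotate_two_val _
    rw [e0, e1] at hval
    have := (π (fmod hb y)).isLt
    omega
  · exact le_LIS_permKron hb _ π


lemma finRotate_two_zpow (a : ℤ) :
    (finRotate 2) ^ a = 1 ∨ (finRotate 2) ^ a = finRotate 2 := by
  have h2 : (finRotate 2) ^ (2 : ℤ) = 1 := by
    rw [show (2:ℤ) = ((2:ℕ):ℤ) from rfl, zpow_natCast]
    decide
  rcases Int.even_or_odd a with ⟨c, hc⟩ | ⟨c, hc⟩
  · left
    rw [hc, show c + c = 2 * c by ring, zpow_mul, h2, one_zpow]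
  · right
    rw [hc, zpow_add, zpow_mul, h2, one_zpow, zpow_one, one_mul]

def Fmap (n : ℕ) (π : Equiv.Perm (Fin (2^n))) : Equiv.Perm (Fin (2^(n+1))) :=
  (finCongr (pow_succ' 2 n).symm).permCongr (permKron (1 : Equiv.Perm (Fin 2)) π)

def Gmap (n : ℕ) (π : Equiv.Perm (Fin (2^n))) : Equiv.Perm (Fin (2^(n+1))) :=
  (finCongr (pow_succ' 2 n).symm).permCongr (permKron (finRotate 2) π)

lemma mem_simpleButterfly_succ {n : ℕ} {σ : Equiv.Perm (Fin (2^(n+1)))} :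
    σ ∈ simpleButterfly 2 (n+1) ↔
      (∃ π ∈ simpleButterfly 2 n, σ = Fmap n π) ∨
      (∃ π ∈ simpleButterfly 2 n, σ = Gmap n π) := by
  constructor
  · rintro ⟨a, π, hπ, rfl⟩
    rcases finRotate_two_zpow a with h | h
    · exact Or.inl ⟨π, hπ, by rw [Fmap, h]⟩
    · exact Or.inr ⟨π, hπ, by rw [Gmap, h]⟩
  · rintro (⟨π, hπ, rfl⟩ | ⟨π, hπ, rfl⟩)
    · exact ⟨0, π, hπ, by rw [Fmap, zpow_zero]⟩
    · exact ⟨1, π, hπ, by rw [Gmap, zpow_one]⟩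

lemma LIS_Fmap (n : ℕ) (π : Equiv.Perm (Fin (2^n))) : LIS (Fmap n π) = 2 * LIS π := by
  rw [Fmap, LIS_permCongr, LIS_permKron_one (Nat.two_pow_pos n)]

lemma LIS_Gmap (n : ℕ) (π : Equiv.Perm (Fin (2^n))) : LIS (Gmap n π) = LIS π := by
  rw [Gmap, LIS_permCongr, LIS_permKron_rot (Nat.two_pow_pos n)]

lemma permKron_left_inj {b : ℕ} (σ2 : Equiv.Perm (Fin 2)) {π π' : Equiv.Perm (Fin b)}
    (h : permKron σ2 π = permKron σ2 π') : π = π' := by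
  ext r
  have h0 : (0:ℕ) < 2 := by omega
  have := congrArg (fun (ρ : Equiv.Perm (Fin (2*b))) => ρ (finProdFinEquiv (⟨0, h0⟩, r))) h
  simp only [permKron_apply_prod] at this
  have := finProdFinEquiv.injective this
  exact congrArg Fin.val (Prod.mk.injEq _ _ _ _ ▸ this).2

lemma Fmap_injective (n : ℕ) : Function.Injective (Fmap n) := by
  intro π π' h
  exact permKron_left_inj _ (((finCongr (pow_succ' 2 n).symm).permCongr).injective h)

lemma Gmap_injective (n : ℕ) : Function.Injective (Gmap n) := by
  intro π π' h
  exact permKron_left_inj _ (((finCongr (pow_succ' 2 n).symm).permCongr).injective h)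

lemma Fmap_ne_Gmap (n : ℕ) (π π' : Equiv.Perm (Fin (2^n))) : Fmap n π ≠ Gmap n π' := by
  intro h
  have hb : 0 < 2^n := Nat.two_pow_pos n
  set e := finCongr (pow_succ' 2 n).symm with he
  set z : Fin (2^n) := ⟨0, hb⟩ with hz
  set x0 : Fin (2^(n+1)) := e (finProdFinEquiv ((⟨0, by omega⟩ : Fin 2), z)) with hx0
  have hF : Fmap n π x0 = e (finProdFinEquiv ((1 : Equiv.Perm (Fin 2)) ⟨0, by omega⟩, π z)) := by
    rw [Fmap, hx0, Equiv.permCongr_apply, Equiv.symm_apply_apply, permKron_apply_prod]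
  have hG : Gmap n π' x0 = e (finProdFinEquiv (finRotate 2 ⟨0, by omega⟩, π' z)) := by
    rw [Gmap, hx0, Equiv.permCongr_apply, Equiv.symm_apply_apply, permKron_apply_prod]
  have := hF.symm.trans ((congrArg (fun ρ : Equiv.Perm (Fin (2^(n+1))) => ρ x0) h).trans hG)
  have h2 := e.injective this
  have h3 := finProdFinEquiv.injective h2
  have h4 := congrArg (fun p => (p.1 : Fin 2).val) h3
  have e1 : ((1 : Equiv.Perm (Fin 2)) ⟨0, by omega⟩).val = 0 := rfl
  have e2 : (finRotate 2 ⟨0, by omega⟩).val = 1 := finRotate_two_val _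
  simp only [e1, e2] at h4
  exact absurd h4 (by norm_num)

lemma butterfly_zero : simpleButterfly 2 0 = {1} := rfl

lemma key (n : ℕ) :
    (∀ σ ∈ simpleButterfly 2 n, ∃ k, k ≤ n ∧ LIS σ = 2 ^ k) ∧
    (∀ k, {σ | σ ∈ simpleButterfly 2 n ∧ LIS σ = 2 ^ k}.ncard = n.choose k) := by
  induction n with
  | zero =>
    constructor
    · intro σ hσ
      have hσ1 : σ = 1 := by rwa [butterfly_zero, Set.mem_singleton_iff] at hσ
      exact ⟨0, le_refl 0, by rw [hσ1, LIS_one]⟩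
    · intro k
      match k with
      | 0 =>
        have hs : {σ | σ ∈ simpleButterfly 2 0 ∧ LIS σ = 2^0} = {1} := by
          ext σ
          simp only [Set.mem_setOf_eq, Set.mem_singleton_iff, butterfly_zero]
          constructor
          · rintro ⟨h, _⟩; exact h
          · rintro rfl
            exact ⟨rfl, by rw [LIS_one]⟩
        rw [hs, Set.ncard_singleton]
        rfl
      | k+1 =>
        have hs : {σ | σ ∈ simpleButterfly 2 0 ∧ LIS σ = 2^(k+1)} = ∅ := by
          ext σ
          simp only [Set.mem_setOf_eq, Set.mem_empty_iff_false, iff_false, not_and,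
            butterfly_zero, Set.mem_singleton_iff]
          rintro rfl
          rw [LIS_one, pow_zero]
          have : (2:ℕ)^(k+1) = 2 * 2^k := by rw [pow_succ]; ring
          have h2 : 0 < (2:ℕ)^k := Nat.two_pow_pos k
          omega
        rw [hs, Set.ncard_empty, Nat.choose_zero_succ]
  | succ n ih =>
    obtain ⟨ih1, ih2⟩ := ih
    constructor
    · intro σ hσ
      rcases mem_simpleButterfly_succ.mp hσ with ⟨π, hπ, rfl⟩ | ⟨π, hπ, rfl⟩
      · obtain ⟨k, hk, hL⟩ := ih1 π hπ
        exact ⟨k+1, by omega, by rw [LIS_Fmap, hL, pow_succ]; ring⟩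
      · obtain ⟨k, hk, hL⟩ := ih1 π hπ
        exact ⟨k, by omega, by rw [LIS_Gmap, hL]⟩
    · intro k
      match k with
      | 0 =>
        have hset : {σ | σ ∈ simpleButterfly 2 (n+1) ∧ LIS σ = 2^0}
            = Gmap n '' {π | π ∈ simpleButterfly 2 n ∧ LIS π = 2^0} := by
          ext σ
          simp only [Set.mem_setOf_eq, Set.mem_image]
          constructor
          · rintro ⟨hmem, hL⟩
            rcases mem_simpleButterfly_succ.mp hmem with ⟨π, hπ, rfl⟩ | ⟨π, hπ, rfl⟩
            · rw [LIS_Fmap, pow_zero] at hL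
              omega
            · rw [LIS_Gmap] at hL
              exact ⟨π, ⟨hπ, hL⟩, rfl⟩
          · rintro ⟨π, ⟨hπ, hL⟩, rfl⟩
            exact ⟨mem_simpleButterfly_succ.mpr (Or.inr ⟨π, hπ, rfl⟩), by rw [LIS_Gmap]; exact hL⟩
        rw [hset, Set.ncard_image_of_injective _ (Gmap_injective n), ih2 0]
        simp
      | k+1 =>
        have hpow : (2:ℕ)^(k+1) = 2 * 2^k := by rw [pow_succ]; ring
        have hset : {σ | σ ∈ simpleButterfly 2 (n+1) ∧ LIS σ = 2^(k+1)}
            = Fmap n '' {π | π ∈ simpleButterfly 2 n ∧ LIS π = 2^k}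
              ∪ Gmap n '' {π | π ∈ simpleButterfly 2 n ∧ LIS π = 2^(k+1)} := by
          ext σ
          simp only [Set.mem_setOf_eq, Set.mem_image, Set.mem_union]
          constructor
          · rintro ⟨hmem, hL⟩
            rcases mem_simpleButterfly_succ.mp hmem with ⟨π, hπ, rfl⟩ | ⟨π, hπ, rfl⟩
            · left
              rw [LIS_Fmap] at hL
              exact ⟨π, ⟨hπ, by omega⟩, rfl⟩
            · right
              rw [LIS_Gmap] at hL
              exact ⟨π, ⟨hπ, hL⟩, rfl⟩
          · rintro (⟨π, ⟨hπ, hL⟩, rfl⟩ | ⟨π, ⟨hπ, hL⟩, rfl⟩)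
            · exact ⟨mem_simpleButterfly_succ.mpr (Or.inl ⟨π, hπ, rfl⟩),
                by rw [LIS_Fmap, hL]; omega⟩
            · exact ⟨mem_simpleButterfly_succ.mpr (Or.inr ⟨π, hπ, rfl⟩),
                by rw [LIS_Gmap]; exact hL⟩
        have hdisj : Disjoint
            (Fmap n '' {π | π ∈ simpleButterfly 2 n ∧ LIS π = 2^k})
            (Gmap n '' {π | π ∈ simpleButterfly 2 n ∧ LIS π = 2^(k+1)}) := by
          rw [Set.disjoint_left]
          rintro x ⟨π, _, rfl⟩ ⟨π', _, h⟩
          exact Fmap_ne_Gmap n π π' h.symm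
        rw [hset, Set.ncard_union_eq hdisj (Set.toFinite _) (Set.toFinite _),
          Set.ncard_image_of_injective _ (Fmap_injective n),
          Set.ncard_image_of_injective _ (Gmap_injective n), ih2 k, ih2 (k+1),
          Nat.choose_succ_succ]

/-- For the simple binary butterfly group `B_{s,2^n}`: every element has LIS a power
of 2, and the number of elements with `L(σ) = 2^k` is `C(n,k)`; i.e. `log₂ L(σ)` is
`Binom(n, 1/2)` for `σ` uniform on `B_{s,2^n}`. -/
theorem simpleButterfly_LIS_binomial (n : ℕ) :
    (∀ σ ∈ simpleButterfly 2 n, ∃ k, k ≤ n ∧ LIS σ = 2 ^ k) ∧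
    (∀ k, k ≤ n →
      {σ | σ ∈ simpleButterfly 2 n ∧ LIS σ = 2 ^ k}.ncard = n.choose k) := by
  obtain ⟨h1, h2⟩ := key n
  exact ⟨h1, fun k _ => h2 k⟩
end

section
/- For each integer m ≥ 2 define α_m = ln((3m² + (m mod 2))/(4m)) / ln m. Then the sequence (α_m)_{m ≥ 2} is nondecreasing: α_m ≤ α_{m+1} for all m ≥ 2. -/
/-- `α_m = ln((3m² + (m mod 2))/(4m)) / ln m`, the exponent with
`m^{α_m} = (3m² + (m mod 2))/(4m)`. -/
noncomputable def alphaExp (m : ℕ) : ℝ :=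
  Real.log ((3 * (m : ℝ) ^ 2 + ((m % 2 : ℕ) : ℝ)) / (4 * (m : ℝ))) / Real.log m

lemma log43 : (1:ℝ)/4 ≤ Real.log (4/3) := by
  have h := Real.log_le_sub_one_of_pos (show (0:ℝ) < 3/4 by norm_num)
  have h2 : Real.log ((3:ℝ)/4) = - Real.log (4/3) := by
    rw [show (3/4:ℝ) = (4/3)⁻¹ by norm_num, Real.log_inv]
  linarith

lemma log_le_div_e {x : ℝ} (hx : 0 < x) : Real.log x ≤ x / Real.exp 1 := by
  have h := Real.log_le_sub_one_of_pos (div_pos hx (Real.exp_pos 1))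
  rw [Real.log_div hx.ne' (Real.exp_pos 1).ne', Real.log_exp] at h
  linarith

set_option maxHeartbeats 1000000 in
/-- The sequence `(α_m)_{m ≥ 2}` is nondecreasing. -/
theorem alphaExp_monotone (m : ℕ) (hm : 2 ≤ m) : alphaExp m ≤ alphaExp (m + 1) := by
  have hx2 : (2:ℝ) ≤ (m:ℝ) := by exact_mod_cast hm
  have hx0 : (0:ℝ) < (m:ℝ) := by linarith
  have hL1 : 0 < Real.log (m:ℝ) := Real.log_pos (by linarith)
  have hL2 : 0 < Real.log ((m:ℝ)+1) := Real.log_pos (by linarith)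
  have hL12 : Real.log (m:ℝ) ≤ Real.log ((m:ℝ)+1) :=
    Real.log_le_log (by linarith) (by linarith)
  have h34 : Real.log ((3:ℝ)/4) ≤ 0 := Real.log_nonpos (by norm_num) (by norm_num)
  rcases Nat.even_or_odd m with he | ho
  · -- even case
    have hm2 : m % 2 = 0 := Nat.even_iff.mp he
    have hm12 : (m+1) % 2 = 1 := by omega
    unfold alphaExp
    rw [hm2, hm12]
    push_cast
    have e1 : (3 * (m:ℝ)^2 + 0) / (4 * (m:ℝ)) = (m:ℝ) * (3/4) := by
      field_simp; ring
    rw [e1, Real.log_mul hx0.ne' (by norm_num)]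
    have harg : ((m:ℝ)+1) * (3/4) ≤ (3 * ((m:ℝ)+1)^2 + 1) / (4 * ((m:ℝ)+1)) := by
      rw [le_div_iff₀ (by linarith)]; nlinarith
    have hstep : Real.log (((m:ℝ)+1) * (3/4)) ≤
        Real.log ((3 * ((m:ℝ)+1)^2 + 1) / (4 * ((m:ℝ)+1))) :=
      Real.log_le_log (by positivity) harg
    rw [Real.log_mul (by linarith) (by norm_num)] at hstep
    have : (Real.log (m:ℝ) + Real.log ((3:ℝ)/4)) / Real.log (m:ℝ) ≤
        (Real.log ((m:ℝ)+1) + Real.log ((3:ℝ)/4)) / Real.log ((m:ℝ)+1) := by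
      rw [div_le_div_iff₀ hL1 hL2]
      have := mul_nonpos_of_nonpos_of_nonneg h34 (sub_nonneg.mpr hL12)
      nlinarith
    refine this.trans ?_
    gcongr
  · -- odd case
    have hm2' : m % 2 = 1 := Nat.odd_iff.mp ho
    have hm3 : 3 ≤ m := by omega
    have hx3 : (3:ℝ) ≤ (m:ℝ) := by exact_mod_cast hm3
    have hm12 : (m+1) % 2 = 0 := by omega
    unfold alphaExp
    rw [hm2', hm12]
    push_cast
    set L1 := Real.log (m:ℝ) with hL1d
    set L2 := Real.log ((m:ℝ)+1) with hL2d
    set c := Real.log ((4:ℝ)/3) with hc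
    have hc4 : (1:ℝ)/4 ≤ c := log43
    set u : ℝ := 1 / (3*(m:ℝ)^2) with hu
    have hu0 : 0 < u := by positivity
    set t := Real.log (1 + u) with htdef
    have ht : t ≤ u := by
      have := Real.log_le_sub_one_of_pos (show (0:ℝ) < 1 + u by linarith)
      linarith
    have ht0 : 0 ≤ t := Real.log_nonneg (by linarith)
    have e1 : (3*(m:ℝ)^2 + 1) / (4*(m:ℝ)) = (m:ℝ) * (3/4) * (1 + u) := by
      rw [hu]; field_simp
    have e2 : (3*((m:ℝ)+1)^2 + 0) / (4*((m:ℝ)+1)) = ((m:ℝ)+1) * (3/4) := by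
      field_simp; ring
    have h1u : (0:ℝ) < 1 + u := by linarith
    rw [e1, e2, Real.log_mul (by positivity) h1u.ne',
        Real.log_mul hx0.ne' (by norm_num),
        Real.log_mul (by linarith : ((m:ℝ)+1) ≠ 0) (by norm_num)]
    have h34c : Real.log ((3:ℝ)/4) = -c := by
      rw [hc, show (3/4:ℝ) = (4/3)⁻¹ by norm_num, Real.log_inv]
    rw [h34c]
    have hgap : 1/((m:ℝ)+1) ≤ L2 - L1 := by
      have h := Real.log_le_sub_one_of_pos (show (0:ℝ) < (m:ℝ)/((m:ℝ)+1) by positivity)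
      rw [Real.log_div hx0.ne' (by linarith : ((m:ℝ)+1) ≠ 0)] at h
      have he : (m:ℝ)/((m:ℝ)+1) = 1 - 1/((m:ℝ)+1) := by field_simp; ring
      rw [he] at h
      linarith
    have hkey : ((m:ℝ)+1) * L2 ≤ 3*(m:ℝ)^2 * c := by
      have h1 : L2 ≤ ((m:ℝ)+1) / Real.exp 1 := log_le_div_e (by linarith)
      have h2 : (2.7:ℝ) < Real.exp 1 := by
        have := Real.exp_one_gt_d9; linarith
      have h3 : ((m:ℝ)+1) / Real.exp 1 ≤ ((m:ℝ)+1) / 2.7 := by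
        apply div_le_div_of_nonneg_left (by linarith) (by norm_num) h2.le
      have h4 : ((m:ℝ)+1) * L2 ≤ ((m:ℝ)+1) * (((m:ℝ)+1)/2.7) :=
        mul_le_mul_of_nonneg_left (h1.trans h3) (by linarith)
      have h5 : ((m:ℝ)+1) * (((m:ℝ)+1)/2.7) ≤ 3*(m:ℝ)^2 * (1/4) := by
        rw [mul_div_assoc', div_le_iff₀ (by norm_num : (0:ℝ) < 2.7)]
        nlinarith
      have h6 : 3*(m:ℝ)^2 * (1/4) ≤ 3*(m:ℝ)^2 * c :=
        mul_le_mul_of_nonneg_left hc4 (by positivity)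
      linarith
    clear_value L1 L2 c u t
    have hmain : t * L2 ≤ c * (L2 - L1) := by
      have h1 : t * L2 ≤ u * L2 := mul_le_mul_of_nonneg_right ht hL2.le
      have h2 : u * L2 ≤ c / ((m:ℝ)+1) := by
        rw [hu, one_div, inv_mul_eq_div, div_le_div_iff₀ (by positivity) (by linarith)]
        nlinarith [hkey]
      have h3 : c / ((m:ℝ)+1) ≤ c * (L2 - L1) := by
        rw [div_eq_mul_one_div]
        exact mul_le_mul_of_nonneg_left hgap (by linarith)
      linarith
    rw [div_le_div_iff₀ hL1 hL2]
    nlinarith [hmain]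
end
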